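/- Let a, b be pseudo Drazin invertible elements of a Banach algebra A with ab = λ ba for some nonzero complex number λ. Then a a^‡ b = b a a^‡, i.e., the idempotent a a^‡ commutes with b. -/

import Mathlib

/-- Membership in the Jacobson radical of a ring. -/
def MemJacobson {A : Type*} [Ring A] (x : A) : Prop := ∀ y : A, IsUnit (1 - y * x)

/-- `b` is a pseudo Drazin inverse of `a`. -/
def IsPDrazinInv {A : Type*} [Ring A] (a b : A) : Prop :=
  a * b = b * a ∧ b * a * b = b ∧ ∃ k : ℕ, 1 ≤ k ∧ MemJacobson (a ^ k - a ^ (k + 1) * b)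

lemma memJacobson_isUnit_smul_sub {A : Type*} [Ring A] [Algebra ℂ A]
    {j : A} (hj : MemJacobson j) {μ : ℂ} (hμ : μ ≠ 0) :
    IsUnit (algebraMap ℂ A μ - j) := by
  have h1 : IsUnit (1 - (μ⁻¹ • (1 : A)) * j) := hj _
  have h2 : μ • (1 - μ⁻¹ • j) = algebraMap ℂ A μ - j := by
    rw [smul_sub, smul_smul, mul_inv_cancel₀ hμ, one_smul, Algebra.algebraMap_eq_smul_one]
  rw [smul_mul_assoc, one_mul] at h1
  rw [← h2]
  rcases h1 with ⟨u, hu⟩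
  refine isUnit_iff_exists.mpr ⟨μ⁻¹ • (u⁻¹ : Aˣ), ?_, ?_⟩
  · rw [smul_mul_smul_comm, mul_inv_cancel₀ hμ, ← hu, ← Units.val_mul, mul_inv_cancel, one_smul,
      Units.val_one]
  · rw [smul_mul_smul_comm, inv_mul_cancel₀ hμ, ← hu, ← Units.val_mul, inv_mul_cancel, one_smul,
      Units.val_one]

lemma specRadius_zero_of_pow_memJacobson {A : Type*} [NormedRing A] [NormedAlgebra ℂ A]
    (c : A) (k : ℕ) (hk : 1 ≤ k) (hj : MemJacobson (c ^ k)) :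
    spectralRadius ℂ c = 0 := by
  have hsub : spectrum ℂ c ⊆ {0} := by
    intro μ hμ
    by_contra hμ0
    have hμ0 : μ ≠ 0 := hμ0
    have h1 : μ ^ k ∈ spectrum ℂ (c ^ k) :=
      spectrum.pow_image_subset c k ⟨μ, hμ, rfl⟩
    exact (spectrum.mem_iff.mp h1) (memJacobson_isUnit_smul_sub hj (pow_ne_zero k hμ0))
  refine le_antisymm ?_ zero_le
  rw [spectralRadius]
  refine iSup₂_le fun μ hμ => ?_
  have : μ = 0 := hsub hμ
  simp [this]

theorem stmt12 {A : Type*} [NormedRing A] [NormedAlgebra ℂ A] [CompleteSpace A]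
    (a ad b bd : A) (ha : IsPDrazinInv a ad) (hb : IsPDrazinInv b bd)
    (lam : ℂ) (hlam : lam ≠ 0) (h : a * b = lam • (b * a)) :
    a * ad * b = b * (a * ad) := by

  obtain ⟨hcm, hinv, k, hk1, hkJ⟩ := ha
  set p := a * ad with hp
  -- basic identities (note: after `set`, hcm : p = ad * a)
  have hpa : p * a = a * p := by rw [hp, mul_assoc, ← hcm]
  have hadp : ad * p = ad := by rw [hp, ← mul_assoc]; exact hinv
  have hpad : p * ad = ad := by rw [hcm]; exact hinv
  have hpp : p * p = p := by
    nth_rewrite 2 [hp]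
    rw [← mul_assoc, hpa, mul_assoc, hpad, ← hp]
  -- powers
  have hADA : ∀ n : ℕ, ad ^ (n + 1) * a ^ (n + 1) = p := by
    intro n; induction n with
    | zero => simpa using hcm.symm
    | succ n ih =>
        have h1 : ad ^ (n + 2) * a ^ (n + 2) = ad ^ (n + 1) * (ad * a) * a ^ (n + 1) := by
          rw [pow_succ, pow_succ' a (n + 1)]
          rw [mul_assoc, ← mul_assoc ad a (a ^ (n + 1)), ← mul_assoc]
        have h2 : ad ^ (n + 1) * p = ad ^ (n + 1) := by
          rw [pow_succ, mul_assoc, hadp]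
        rw [h1, ← hcm, h2, ih]
  have hAAD : ∀ n : ℕ, a ^ (n + 1) * ad ^ (n + 1) = p := by
    intro n; induction n with
    | zero => simpa using hp.symm
    | succ n ih =>
        have h1 : a ^ (n + 2) * ad ^ (n + 2) = a ^ (n + 1) * (a * ad) * ad ^ (n + 1) := by
          rw [pow_succ, pow_succ' ad (n + 1)]
          rw [mul_assoc, ← mul_assoc a ad (ad ^ (n + 1)), ← mul_assoc]
        have h2 : p * ad ^ (n + 1) = ad ^ (n + 1) := by
          rw [pow_succ' ad n, ← mul_assoc, hpad]
        rw [h1, ← hp, mul_assoc, h2, ih]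

  -- the quasinilpotent part
  set c := a * (1 - p) with hcdef
  have hq : (1 - p) * a = a * (1 - p) := by
    rw [sub_mul, mul_sub, one_mul, mul_one, hpa]
  have hqq : (1 - p) * (1 - p) = (1 - p) := by
    rw [sub_mul, one_mul, mul_sub, mul_one, hpp, sub_self, sub_zero]
  have hcpow : ∀ n : ℕ, a ^ (n + 1) * (1 - p) = c ^ (n + 1) := by
    intro n; induction n with
    | zero => simp [hcdef]
    | succ n ih =>
        have e : a ^ (n + 2) = a ^ (n + 1) * a := pow_succ a (n + 1)
        have e2 : c ^ (n + 2) = c ^ (n + 1) * c := pow_succ c (n + 1)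
        rw [e2, ← ih, e, hcdef]
        rw [mul_assoc, mul_assoc, ← mul_assoc (1 - p) a (1 - p), hq,
          mul_assoc a (1 - p) (1 - p), hqq]
  -- c ^ k is in the radical
  have hck : MemJacobson (c ^ k) := by
    obtain ⟨m, rfl⟩ := Nat.exists_eq_add_of_le hk1
    have : c ^ (1 + m) = a ^ (m + 1) - a ^ (m + 1 + 1) * ad := by
      rw [add_comm 1 m, ← hcpow m, mul_sub, mul_one, hp, pow_succ a (m + 1), mul_assoc]
    rw [this]
    have := hkJ
    rwa [add_comm 1 m] at this
  -- commutation with powers of a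
  have hab : ∀ n : ℕ, a ^ n * b = lam ^ n • (b * a ^ n) := by
    intro n; induction n with
    | zero => simp
    | succ n ih =>
        calc a ^ (n + 1) * b = a * (a ^ n * b) := by rw [pow_succ' a n, mul_assoc]
          _ = lam ^ n • (a * b * a ^ n) := by rw [ih, mul_smul_comm, mul_assoc]
          _ = lam ^ n • (lam • (b * (a * a ^ n))) := by rw [h, smul_mul_assoc, mul_assoc]
          _ = lam ^ (n + 1) • (b * a ^ (n + 1)) := by
              rw [smul_smul, ← pow_succ, pow_succ' a n]
  -- Gelfand : norms of powers of c decay superexponentially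
  have hrad : spectralRadius ℂ c = 0 := specRadius_zero_of_pow_memJacobson c k hk1 hck
  have hgel := spectrum.pow_norm_pow_one_div_tendsto_nhds_spectralRadius c
  rw [hrad] at hgel
  have hreal : Filter.Tendsto (fun n : ℕ => ‖c ^ n‖ ^ (1 / (n : ℝ))) Filter.atTop (nhds 0) := by
    have ht := (ENNReal.tendsto_toReal (by simp : (0 : ENNReal) ≠ ⊤)).comp hgel
    have ht2 : Filter.Tendsto (fun n : ℕ => ‖c ^ n‖ ^ (1 / (n : ℝ))) Filter.atTop
        (nhds ((0 : ENNReal)).toReal) :=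
      ht.congr fun n => ENNReal.toReal_ofReal (Real.rpow_nonneg (norm_nonneg _) _)
    simpa using ht2
  -- the constant M
  obtain ⟨M, hM0, hMl, hMli⟩ :
      ∃ M : ℝ, 0 < M ∧ ‖lam‖ * ‖ad‖ ≤ M ∧ ‖lam⁻¹‖ * ‖ad‖ ≤ M := by
    refine ⟨(max ‖lam‖ ‖lam⁻¹‖) * (‖ad‖ + 1) + 1, ?_, ?_, ?_⟩
    · have h1 : (0:ℝ) ≤ max ‖lam‖ ‖lam⁻¹‖ := le_max_of_le_left (norm_nonneg _)
      nlinarith [norm_nonneg ad]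
    · nlinarith [mul_nonneg (sub_nonneg.mpr (le_max_left ‖lam‖ ‖lam⁻¹‖)) (norm_nonneg ad),
        (norm_nonneg lam).trans (le_max_left ‖lam‖ ‖lam⁻¹‖)]
    · nlinarith [mul_nonneg (sub_nonneg.mpr (le_max_right ‖lam‖ ‖lam⁻¹‖)) (norm_nonneg ad),
        (norm_nonneg lam).trans (le_max_left ‖lam‖ ‖lam⁻¹‖)]
  -- eventually ‖c^n‖ ≤ (1/(2M))^n
  have hε : (0 : ℝ) < 1 / (2 * M) := by positivity
  have hev : ∀ᶠ n : ℕ in Filter.atTop, ‖c ^ n‖ ^ (1 / (n : ℝ)) < 1 / (2 * M) :=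
    hreal.eventually (gt_mem_nhds hε)
  obtain ⟨N, hN⟩ := Filter.eventually_atTop.mp hev
  have hcsmall : ∀ n : ℕ, N ≤ n → 1 ≤ n → ‖c ^ n‖ ≤ (1 / (2 * M)) ^ n := by
    intro n hn hn1
    have hnn : (n : ℝ) ≠ 0 := by positivity
    have hx : ‖c ^ n‖ = (‖c ^ n‖ ^ (1 / (n : ℝ))) ^ n := by
      rw [← Real.rpow_natCast (‖c ^ n‖ ^ (1 / (n : ℝ))) n, ← Real.rpow_mul (norm_nonneg _),
        one_div, inv_mul_cancel₀ hnn, Real.rpow_one]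
    rw [hx]
    exact pow_le_pow_left₀ (Real.rpow_nonneg (norm_nonneg _) _) (le_of_lt (hN n hn)) n
  -- key bounds
  have hbound : ∀ z : A, (∀ n : ℕ, 1 ≤ n → ‖z‖ ≤ M ^ n * (‖b‖ * ‖c ^ n‖)) → z = 0 := by
    intro z hz
    have hle : ∀ n : ℕ, max N 1 ≤ n → ‖z‖ ≤ ‖b‖ * (1 / 2) ^ n := by
      intro n hn
      have hn1 : 1 ≤ n := le_trans (le_max_right _ _) hn
      have hnN : N ≤ n := le_trans (le_max_left _ _) hn
      have h1 := hz n hn1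
      have h2 : M ^ n * (‖b‖ * ‖c ^ n‖) ≤ M ^ n * (‖b‖ * (1 / (2 * M)) ^ n) :=
        mul_le_mul_of_nonneg_left
          (mul_le_mul_of_nonneg_left (hcsmall n hnN hn1) (norm_nonneg b))
          (le_of_lt (pow_pos hM0 n))
      have hMne : M ≠ 0 := ne_of_gt hM0
      have h3 : M ^ n * (‖b‖ * (1 / (2 * M)) ^ n) = ‖b‖ * (1 / 2) ^ n := by
        rw [← mul_assoc, mul_comm (M ^ n) ‖b‖, mul_assoc, ← mul_pow]
        congr 2
        field_simp
      linarith
    have htend : Filter.Tendsto (fun n : ℕ => ‖b‖ * (1 / 2) ^ n) Filter.atTop (nhds 0) := by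
      have := tendsto_pow_atTop_nhds_zero_of_lt_one (by norm_num : (0:ℝ) ≤ 1/2)
        (by norm_num : (1:ℝ)/2 < 1)
      simpa using this.const_mul ‖b‖
    have : ‖z‖ ≤ 0 := ge_of_tendsto htend
      (Filter.eventually_atTop.mpr ⟨max N 1, hle⟩)
    exact norm_le_zero_iff.mp this
  -- p * b * (1 - p) = 0
  have hx0 : p * b * (1 - p) = 0 := by
    apply hbound
    intro n hn1
    obtain ⟨m, rfl⟩ := Nat.exists_eq_add_of_le hn1
    have key : p * b * (1 - p) = lam ^ (1 + m) • (ad ^ (1 + m) * b * c ^ (1 + m)) := by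
      rw [add_comm 1 m]
      calc p * b * (1 - p) = ad ^ (m + 1) * (a ^ (m + 1) * b) * (1 - p) := by
            nth_rewrite 1 [← hADA m]
            rw [mul_assoc (ad ^ (m + 1)) (a ^ (m + 1)) b]
        _ = lam ^ (m + 1) • (ad ^ (m + 1) * (b * (a ^ (m + 1) * (1 - p)))) := by
            rw [hab (m + 1), mul_smul_comm, smul_mul_assoc, mul_assoc, mul_assoc]
        _ = lam ^ (m + 1) • (ad ^ (m + 1) * b * c ^ (m + 1)) := by
            rw [hcpow m, mul_assoc]
    rw [key, norm_smul]
    have h1 : ‖ad ^ (1 + m) * b * c ^ (1 + m)‖ ≤ ‖ad‖ ^ (1 + m) * ‖b‖ * ‖c ^ (1 + m)‖ := by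
      calc ‖ad ^ (1 + m) * b * c ^ (1 + m)‖ ≤ ‖ad ^ (1 + m) * b‖ * ‖c ^ (1 + m)‖ := norm_mul_le _ _
        _ ≤ ‖ad ^ (1 + m)‖ * ‖b‖ * ‖c ^ (1 + m)‖ :=
            mul_le_mul_of_nonneg_right (norm_mul_le _ _) (norm_nonneg _)
        _ ≤ ‖ad‖ ^ (1 + m) * ‖b‖ * ‖c ^ (1 + m)‖ :=
            mul_le_mul_of_nonneg_right
              (mul_le_mul_of_nonneg_right (norm_pow_le' ad (by omega : 0 < 1 + m))
                (norm_nonneg b)) (norm_nonneg _)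
    have h2 : ‖lam ^ (1 + m)‖ * (‖ad‖ ^ (1 + m) * ‖b‖ * ‖c ^ (1 + m)‖)
        ≤ M ^ (1 + m) * (‖b‖ * ‖c ^ (1 + m)‖) := by
      have hl : ‖lam ^ (1 + m)‖ * ‖ad‖ ^ (1 + m) ≤ M ^ (1 + m) := by
        rw [norm_pow, ← mul_pow]
        exact pow_le_pow_left₀ (by positivity) hMl _
      nlinarith [mul_le_mul_of_nonneg_right hl
        (mul_nonneg (norm_nonneg b) (norm_nonneg (c ^ (1 + m))))]
    calc ‖lam ^ (1 + m)‖ * ‖ad ^ (1 + m) * b * c ^ (1 + m)‖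
        ≤ ‖lam ^ (1 + m)‖ * (‖ad‖ ^ (1 + m) * ‖b‖ * ‖c ^ (1 + m)‖) :=
          mul_le_mul_of_nonneg_left h1 (norm_nonneg _)
      _ ≤ M ^ (1 + m) * (‖b‖ * ‖c ^ (1 + m)‖) := h2
  -- (1 - p) * b * p = 0
  have hy0 : (1 - p) * b * p = 0 := by
    apply hbound
    intro n hn1
    obtain ⟨m, rfl⟩ := Nat.exists_eq_add_of_le hn1
    have hba : b * a ^ (m + 1) = (lam⁻¹) ^ (m + 1) • (a ^ (m + 1) * b) := by
      rw [hab (m + 1), smul_smul, ← mul_pow, inv_mul_cancel₀ hlam, one_pow, one_smul]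
    have key : (1 - p) * b * p = (lam⁻¹) ^ (1 + m) • (c ^ (1 + m) * b * ad ^ (1 + m)) := by
      rw [add_comm 1 m]
      calc (1 - p) * b * p = (1 - p) * (b * a ^ (m + 1)) * ad ^ (m + 1) := by
            nth_rewrite 2 [← hAAD m]
            rw [← mul_assoc, mul_assoc (1 - p) b (a ^ (m + 1))]
        _ = (lam⁻¹) ^ (m + 1) • ((1 - p) * (a ^ (m + 1) * b) * ad ^ (m + 1)) := by
            rw [hba, mul_smul_comm, smul_mul_assoc]
        _ = (lam⁻¹) ^ (m + 1) • (c ^ (m + 1) * b * ad ^ (m + 1)) := by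
            congr 1
            have hqc : (1 - p) * a ^ (m + 1) = c ^ (m + 1) := by
              rw [← hcpow m]
              exact ((show Commute (1 - p) a from hq).pow_right (m + 1)).eq
            rw [← mul_assoc, hqc]
    rw [key, norm_smul]
    have h1 : ‖c ^ (1 + m) * b * ad ^ (1 + m)‖ ≤ ‖c ^ (1 + m)‖ * ‖b‖ * ‖ad‖ ^ (1 + m) := by
      calc ‖c ^ (1 + m) * b * ad ^ (1 + m)‖ ≤ ‖c ^ (1 + m) * b‖ * ‖ad ^ (1 + m)‖ := norm_mul_le _ _
        _ ≤ ‖c ^ (1 + m)‖ * ‖b‖ * ‖ad ^ (1 + m)‖ :=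
            mul_le_mul_of_nonneg_right (norm_mul_le _ _) (norm_nonneg _)
        _ ≤ ‖c ^ (1 + m)‖ * ‖b‖ * ‖ad‖ ^ (1 + m) :=
            mul_le_mul_of_nonneg_left (norm_pow_le' ad (by omega : 0 < 1 + m))
              (mul_nonneg (norm_nonneg _) (norm_nonneg _))
    have hl : ‖(lam⁻¹) ^ (1 + m)‖ * ‖ad‖ ^ (1 + m) ≤ M ^ (1 + m) := by
      rw [norm_pow, ← mul_pow]
      exact pow_le_pow_left₀ (by positivity) hMli _
    calc ‖(lam⁻¹) ^ (1 + m)‖ * ‖c ^ (1 + m) * b * ad ^ (1 + m)‖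
        ≤ ‖(lam⁻¹) ^ (1 + m)‖ * (‖c ^ (1 + m)‖ * ‖b‖ * ‖ad‖ ^ (1 + m)) :=
          mul_le_mul_of_nonneg_left h1 (norm_nonneg _)
      _ ≤ M ^ (1 + m) * (‖b‖ * ‖c ^ (1 + m)‖) := by
          nlinarith [mul_le_mul_of_nonneg_right hl
            (mul_nonneg (norm_nonneg b) (norm_nonneg (c ^ (1 + m))))]
  -- conclude
  have e1 : p * b = p * b * p := by
    have h1 : p * b - p * b * p = 0 := by
      calc p * b - p * b * p = p * b * (1 - p) := by rw [mul_sub, mul_one]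
        _ = 0 := hx0
    exact sub_eq_zero.mp h1
  have e2 : b * p = p * (b * p) := by
    have h2 : b * p - p * (b * p) = 0 := by
      calc b * p - p * (b * p) = (1 - p) * (b * p) := by rw [sub_mul, one_mul]
        _ = (1 - p) * b * p := by rw [mul_assoc]
        _ = 0 := hy0
    exact sub_eq_zero.mp h2
  rw [e1, e2, mul_assoc]
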